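/- Consider the regression model: on a probability space, X : Ω → ℝ^d and N : Ω → ℝ are independent random variables with E[N] = 0, E[N²] ≤ σ² for a given σ > 0, E[|N|^p] ≤ C_p·σ^p for given p ≥ 2 and C_p ≥ 1, for every u ∈ ℝ^d, E[⟨X,u⟩⁴] ≤ C·(E[⟨X,u⟩²])² for a given C ≥ 1, and for every unit vector u ∈ ℝ^d, 1/C₃ ≤ E[⟨X,u⟩²] ≤ 1 for a given C₃ ≥ 1 (all stated moments finite). Let w, w* ∈ ℝ^d, let n ≥ 1 be an integer, α ∈ (0,1), and let κ > 0 satisfy κ ≥ max{ 8·√(C·E[⟨X, w−w*⟩²]), 2·(8·C_p·C)^{1/p}·σ, 2·(8·C_p·√(nα)/log(2/α))^{1/(p−1)}·σ }. Then ‖ E[ κ·((⟨X, w−w*⟩ − N)/max(|⟨X, w−w*⟩ − N|, κ))·X ] ‖ ≥ (11/(16·C₃))·‖w − w*‖ − log(2/α)·σ/(8·√(nα)). -/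

import Mathlib

open MeasureTheory ProbabilityTheory
open scoped RealInnerProductSpace

lemma clip_resid (κ : ℝ) (hκ : 0 < κ) (t : ℝ) :
    |t - κ * (t / max |t| κ)| = max (|t| - κ) 0 := by
  rcases le_or_gt |t| κ with h | h
  · rw [max_eq_right h, max_eq_right (by linarith : |t| - κ ≤ 0)]
    rw [mul_div_assoc', mul_comm, mul_div_assoc, div_self hκ.ne', mul_one, sub_self, abs_zero]
  · have ht0 : |t| ≠ 0 := by intro h0; rw [h0] at h; linarith
    rw [max_eq_left h.le, max_eq_left (by linarith : (0:ℝ) ≤ |t| - κ)]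
    have he : t - κ * (t / |t|) = t * ((|t| - κ) / |t|) := by field_simp
    rw [he, abs_mul, abs_div, abs_abs, abs_of_nonneg (by linarith : (0:ℝ) ≤ |t| - κ)]
    field_simp

lemma cube_bound (κ : ℝ) (hκ : 0 < κ) (a : ℝ) (ha : 0 ≤ a) :
    max (a - κ/2) 0 ≤ 4 * a^3 / κ^2 := by
  apply max_le _ (by positivity)
  rw [sub_le_iff_le_add, div_add' _ _ _ (by positivity : (κ:ℝ)^2 ≠ 0),
    le_div_iff₀ (by positivity : (0:ℝ) < κ^2)]
  nlinarith [mul_nonneg (sq_nonneg (2*a - κ)) (show (0:ℝ) ≤ a + κ/2 by positivity),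
    mul_nonneg (mul_nonneg ha ha) hκ.le]

lemma tri_max (a b κ : ℝ) : max (a + b - κ) 0 ≤ max (a - κ/2) 0 + max (b - κ/2) 0 := by
  rcases le_or_gt (a + b) κ with h | h
  · rw [max_eq_right (by linarith)]
    positivity
  · apply max_le _ (by positivity)
    have h1 : a - κ/2 ≤ max (a - κ/2) 0 := le_max_left _ _
    have h2 : b - κ/2 ≤ max (b - κ/2) 0 := le_max_left _ _
    linarith

lemma rpow_tail_bound (κ : ℝ) (hκ : 0 < κ) (p : ℝ) (hp : 2 ≤ p) (b : ℝ) :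
    max (|b| - κ/2) 0 ≤ |b| ^ p * (2/κ) ^ (p - 1) := by
  rcases le_or_gt |b| (κ/2) with h | h
  · rw [max_eq_right (by linarith)]
    positivity
  · have hb0 : (0:ℝ) < |b| := lt_trans (by positivity) h
    rw [max_eq_left (by linarith)]
    have key : (1:ℝ) ≤ (|b| * (2/κ)) ^ (p - 1) := by
      apply Real.one_le_rpow _ (by linarith)
      rw [show |b| * (2/κ) = 2 * |b| / κ by ring, le_div_iff₀ hκ]
      linarith
    calc |b| - κ/2 ≤ |b| := by linarith
      _ = |b| * 1 := (mul_one _).symm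
      _ ≤ |b| * (|b| * (2/κ)) ^ (p - 1) := mul_le_mul_of_nonneg_left key hb0.le
      _ = |b| * (|b| ^ (p-1) * (2/κ) ^ (p-1)) := by
          rw [Real.mul_rpow hb0.le (by positivity)]
      _ = (|b| ^ (1:ℝ) * |b| ^ (p-1)) * (2/κ) ^ (p-1) := by
          rw [Real.rpow_one]; ring
      _ = |b| ^ p * (2/κ) ^ (p-1) := by
          rw [← Real.rpow_add hb0]; norm_num

lemma kappa_pow (κ σ p K : ℝ) (hκ : 0 < κ) (hσ : 0 < σ) (hp : 2 ≤ p) (hK : 0 < K)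
    (h : 2 * K ^ (1/(p-1)) * σ ≤ κ) :
    σ ^ p * (2/κ) ^ (p - 1) ≤ σ / K := by
  have hq : 0 < p - 1 := by linarith
  have h1 : K ^ (1/(p-1)) ≤ κ / (2*σ) := by
    rw [le_div_iff₀ (by positivity)]; nlinarith [Real.rpow_nonneg hK.le (1/(p-1))]
  have h2 : K ≤ (κ / (2*σ)) ^ (p-1) := by
    calc K = (K ^ (1/(p-1))) ^ (p-1) := by
            rw [← Real.rpow_mul hK.le, one_div, inv_mul_cancel₀ hq.ne', Real.rpow_one]
      _ ≤ (κ / (2*σ)) ^ (p-1) := Real.rpow_le_rpow (Real.rpow_nonneg hK.le _) h1 hq.le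
  have e2 : (2*σ/κ) ^ (p-1) = ((κ/(2*σ)) ^ (p-1))⁻¹ := by
    rw [show (2*σ/κ : ℝ) = (κ/(2*σ))⁻¹ by field_simp, Real.inv_rpow (by positivity)]
  have eσ : σ ^ p = σ * σ ^ (p-1) := by
    nth_rewrite 2 [← Real.rpow_one σ]
    rw [← Real.rpow_add hσ]; norm_num
  calc σ ^ p * (2/κ) ^ (p-1) = σ * (σ ^ (p-1) * (2/κ)^(p-1)) := by rw [eσ]; ring
    _ = σ * (2*σ/κ) ^ (p-1) := by
        rw [← Real.mul_rpow hσ.le (by positivity), show σ*(2/κ) = 2*σ/κ by ring]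
    _ = σ * ((κ/(2*σ))^(p-1))⁻¹ := by rw [e2]
    _ ≤ σ * K⁻¹ := mul_le_mul_of_nonneg_left (inv_anti₀ hK h2) hσ.le
    _ = σ / K := by rw [div_eq_mul_inv]

set_option maxHeartbeats 1000000 in
/-- Under the regression model (independent covariate `X` and noise `N`,
`E[N]=0`, `E[N²] ≤ σ²`, `E[|N|^p] ≤ C_p σ^p`, L4–L2 hypercontractive covariates with
constant `C`, and `1/C₃ ≤ E[⟨X,u⟩²] ≤ 1` for unit `u`), if the clipping parameter `κ` is
at least `max{8√(C·E[⟨X,w−w*⟩²]), 2(8C_p C)^{1/p}σ, 2(8C_p√(nα)/log(2/α))^{1/(p−1)}σ}`,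
then the norm of the expected clipped gradient at `w` is at least
`(11/(16C₃))·‖w−w*‖ − log(2/α)·σ/(8√(nα))`. -/
theorem stmt6 {Ω : Type*} [MeasureSpace Ω] [IsProbabilityMeasure (ℙ : Measure Ω)]
    {d : ℕ} (X : Ω → EuclideanSpace ℝ (Fin d)) (N : Ω → ℝ)
    (hXmeas : Measurable X) (hNmeas : Measurable N)
    (hindep : IndepFun X N ℙ)
    (hNmean : (∫ ω, N ω) = 0)
    (σ : ℝ) (hσ : 0 < σ)
    (hN2 : MemLp N 2 ℙ) (hNvar : (∫ ω, (N ω) ^ 2) ≤ σ ^ 2)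
    (p : ℝ) (hp : 2 ≤ p) (Cp : ℝ) (hCp : 1 ≤ Cp)
    (hNpInt : Integrable (fun ω => |N ω| ^ p) ℙ)
    (hNp : (∫ ω, |N ω| ^ p) ≤ Cp * σ ^ p)
    (C : ℝ) (hC : 1 ≤ C)
    (hX4 : MemLp X 4 ℙ)
    (hhc : ∀ u : EuclideanSpace ℝ (Fin d),
      (∫ ω, ⟪X ω, u⟫ ^ 4) ≤ C * (∫ ω, ⟪X ω, u⟫ ^ 2) ^ 2)
    (C₃ : ℝ) (hC₃ : 1 ≤ C₃)
    (hcond : ∀ u : EuclideanSpace ℝ (Fin d), ‖u‖ = 1 →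
      1 / C₃ ≤ (∫ ω, ⟪X ω, u⟫ ^ 2) ∧ (∫ ω, ⟪X ω, u⟫ ^ 2) ≤ 1)
    (w wstar : EuclideanSpace ℝ (Fin d)) (n : ℕ) (hn : 1 ≤ n)
    (α : ℝ) (hα : α ∈ Set.Ioo (0 : ℝ) 1)
    (κ : ℝ) (hκpos : 0 < κ)
    (hκ : max (max (8 * Real.sqrt (C * ∫ ω, ⟪X ω, w - wstar⟫ ^ 2))
          (2 * (8 * Cp * C) ^ (1 / p) * σ))
        (2 * (8 * Cp * Real.sqrt (n * α) / Real.log (2 / α)) ^ (1 / (p - 1)) * σ) ≤ κ) :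
    (11 / (16 * C₃)) * ‖w - wstar‖ - Real.log (2 / α) * σ / (8 * Real.sqrt (n * α)) ≤
      ‖∫ ω, (κ * ((⟪X ω, w - wstar⟫ - N ω) /
          max (|⟪X ω, w - wstar⟫ - N ω|) κ)) • X ω‖ := by
  obtain ⟨hα0, hα1⟩ := hα
  have hlog : 0 < Real.log (2 / α) := Real.log_pos (by rw [lt_div_iff₀ hα0]; linarith)
  have hn0 : (0:ℝ) < n := by exact_mod_cast hn
  have hna : (0:ℝ) < Real.sqrt (n * α) := Real.sqrt_pos.2 (by positivity)
  set L : ℝ := Real.log (2 / α) * σ / (8 * Real.sqrt (n * α)) with hLdef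
  have hL0 : 0 ≤ L := by positivity
  by_cases hv0 : w - wstar = 0
  · rw [hv0]
    simp only [norm_zero, mul_zero, zero_sub]
    exact le_trans (neg_nonpos.2 hL0) (norm_nonneg _)
  set v : EuclideanSpace ℝ (Fin d) := w - wstar with hvdef
  have hvn : 0 < ‖v‖ := norm_pos_iff.2 hv0
  set u : EuclideanSpace ℝ (Fin d) := ‖v‖⁻¹ • v with hudef
  have hu1 : ‖u‖ = 1 := by
    rw [hudef, norm_smul, norm_inv, norm_norm, inv_mul_cancel₀ hvn.ne']
  have hvu : v = ‖v‖ • u := by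
    rw [hudef, smul_smul, mul_inv_cancel₀ hvn.ne', one_smul]
  set g : Ω → ℝ := fun ω => ⟪X ω, u⟫ with hgdef
  have hZg : ∀ ω, ⟪X ω, v⟫ = ‖v‖ * g ω := by
    intro ω; rw [hgdef]; nth_rewrite 1 [hvu]; exact real_inner_smul_right _ _ _
  have hinnercont : Continuous (fun x : EuclideanSpace ℝ (Fin d) => ⟪x, u⟫) :=
    continuous_id.inner continuous_const
  have hgm : Measurable g := hinnercont.measurable.comp hXmeas
  -- integrability of g powers
  have hg4mem : MemLp g 4 ℙ := hX4.inner_const u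
  have hg2mem : MemLp g 2 ℙ := hg4mem.mono_exponent (by norm_num)
  have hg1 : Integrable g ℙ := hg2mem.integrable (by norm_num)
  have hg2 : Integrable (fun ω => g ω ^ 2) ℙ := hg2mem.integrable_sq
  have hg4 : Integrable (fun ω => g ω ^ 4) ℙ := by
    refine (hg4mem.integrable_norm_rpow (by norm_num) (by norm_num)).congr
      (Filter.Eventually.of_forall fun ω => ?_)
    have h4 : ((4:ENNReal)).toReal = ((4:ℕ):ℝ) := by norm_num
    simp only [h4, Real.norm_eq_abs, Real.rpow_natCast, pow_abs,
      abs_of_nonneg (by positivity : (0:ℝ) ≤ g ω ^ 4)]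
  -- measurability and the clipping function
  have hZmeas : Measurable (fun ω => ⟪X ω, v⟫) :=
    ((continuous_id.inner continuous_const).measurable).comp hXmeas
  have hAmeas : Measurable (fun ω => ⟪X ω, v⟫ - N ω) := hZmeas.sub hNmeas
  have hψAmeas : Measurable
      (fun ω => κ * ((⟪X ω, v⟫ - N ω) / max |⟪X ω, v⟫ - N ω| κ)) :=
    (hAmeas.div (hAmeas.abs.max measurable_const)).const_mul κ
  have hψbdd : ∀ t : ℝ, |κ * (t / max |t| κ)| ≤ κ := by
    intro t
    have hm : 0 < max |t| κ := lt_of_lt_of_le hκpos (le_max_right _ _)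
    rw [abs_mul, abs_of_pos hκpos, abs_div, abs_of_pos hm]
    calc κ * (|t| / max |t| κ) ≤ κ * 1 := by
          refine mul_le_mul_of_nonneg_left ?_ hκpos.le
          rw [div_le_one hm]; exact le_max_left _ _
      _ = κ := mul_one κ
  have hψAmem : MemLp (fun ω => κ * ((⟪X ω, v⟫ - N ω) / max |⟪X ω, v⟫ - N ω| κ)) ⊤ ℙ :=
    memLp_top_of_bound hψAmeas.aestronglyMeasurable κ
      (Filter.Eventually.of_forall fun ω => by
        rw [Real.norm_eq_abs]; exact hψbdd (⟪X ω, v⟫ - N ω))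
  have hXint : Integrable X ℙ := hX4.integrable (by norm_num)
  have hfint : Integrable
      (fun ω => (κ * ((⟪X ω, v⟫ - N ω) / max |⟪X ω, v⟫ - N ω| κ)) • X ω) ℙ :=
    hXint.smul_of_top_right hψAmem
  -- projection onto u
  have hproj : (∫ ω, (κ * ((⟪X ω, v⟫ - N ω) / max |⟪X ω, v⟫ - N ω| κ)) * g ω) ≤
      ‖∫ ω, (κ * ((⟪X ω, v⟫ - N ω) / max |⟪X ω, v⟫ - N ω| κ)) • X ω‖ := by
    have h1 := integral_inner (𝕜 := ℝ) hfint u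
    calc (∫ ω, (κ * ((⟪X ω, v⟫ - N ω) / max |⟪X ω, v⟫ - N ω| κ)) * g ω)
        = ⟪u, ∫ ω, (κ * ((⟪X ω, v⟫ - N ω) / max |⟪X ω, v⟫ - N ω| κ)) • X ω⟫ := by
          rw [← h1]
          congr 1; funext ω
          simp only [hgdef, real_inner_smul_right]
          rw [real_inner_comm u (X ω)]
      _ ≤ ‖u‖ * ‖∫ ω, (κ * ((⟪X ω, v⟫ - N ω) / max |⟪X ω, v⟫ - N ω| κ)) • X ω‖ :=
          real_inner_le_norm _ _
      _ = ‖∫ ω, (κ * ((⟪X ω, v⟫ - N ω) / max |⟪X ω, v⟫ - N ω| κ)) • X ω‖ := by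
          rw [hu1, one_mul]
  -- independence facts
  have hNint : Integrable N ℙ := hN2.integrable (by norm_num)
  have hindNg : IndepFun N g ℙ :=
    hindep.symm.comp measurable_id (continuous_id.inner continuous_const).measurable
  have hNg_int : Integrable (fun ω => N ω * g ω) ℙ := hindNg.integrable_mul hNint hg1
  have hNg_zero : (∫ ω, N ω * g ω) = 0 := by
    calc (∫ ω, N ω * g ω) = (∫ ω, N ω) * ∫ ω, g ω :=
          hindNg.integral_fun_mul_eq_mul_integral hNmeas.aestronglyMeasurable hgm.aestronglyMeasurable
      _ = 0 := by rw [hNmean, zero_mul]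
  set s : ℝ := ∫ ω, g ω ^ 2 with hsdef
  have hs0 : 0 ≤ s := integral_nonneg fun ω => sq_nonneg _
  have hsu : s ≤ 1 := (hcond u hu1).2
  have hsl : 1 / C₃ ≤ s := (hcond u hu1).1
  have hZ2 : (∫ ω, ⟪X ω, v⟫ ^ 2) = ‖v‖ ^ 2 * s := by
    calc (∫ ω, ⟪X ω, v⟫ ^ 2) = ∫ ω, ‖v‖ ^ 2 * g ω ^ 2 := by
          congr 1; funext ω; rw [hZg ω]; ring
      _ = ‖v‖ ^ 2 * s := integral_const_mul _ _
  -- κ² bound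
  have hκ1 : 64 * C * (‖v‖ ^ 2 * s) ≤ κ ^ 2 := by
    have h8 : 8 * Real.sqrt (C * ∫ ω, ⟪X ω, v⟫ ^ 2) ≤ κ :=
      le_trans (le_trans (le_max_left _ _) (le_max_left _ _)) hκ
    have hCZ : 0 ≤ C * ∫ ω, ⟪X ω, v⟫ ^ 2 := by rw [hZ2]; positivity
    have h9 : Real.sqrt (C * ∫ ω, ⟪X ω, v⟫ ^ 2) ≤ κ / 8 := by linarith
    have h10 : C * (∫ ω, ⟪X ω, v⟫ ^ 2) ≤ (κ / 8) ^ 2 := by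
      rw [← Real.sq_sqrt hCZ]
      exact pow_le_pow_left₀ (Real.sqrt_nonneg _) h9 2
    rw [hZ2] at h10; nlinarith
  -- noise tail bound
  have hκ3 : 2 * (8 * Cp * Real.sqrt (↑n * α) / Real.log (2 / α)) ^ (1 / (p - 1)) * σ ≤ κ :=
    le_trans (le_max_right _ _) hκ
  have hK0 : (0:ℝ) < 8 * Cp * Real.sqrt (↑n * α) / Real.log (2 / α) := by positivity
  have hNtail_int : Integrable (fun ω => max (|N ω| - κ / 2) 0) ℙ := by
    refine Integrable.mono' (hNpInt.mul_const ((2 / κ) ^ (p - 1)))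
      ((hNmeas.abs.sub measurable_const).max measurable_const).aestronglyMeasurable ?_
    filter_upwards with ω
    rw [Real.norm_eq_abs, abs_of_nonneg (le_max_right _ _)]
    exact rpow_tail_bound κ hκpos p hp (N ω)
  have hNtail_le : (∫ ω, max (|N ω| - κ / 2) 0) ≤ L := by
    have h1 : (∫ ω, max (|N ω| - κ / 2) 0) ≤ ∫ ω, |N ω| ^ p * (2 / κ) ^ (p - 1) :=
      integral_mono hNtail_int (hNpInt.mul_const _) fun ω =>
        rpow_tail_bound κ hκpos p hp (N ω)
    have h2 : (∫ ω, |N ω| ^ p * (2 / κ) ^ (p - 1)) =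
        (∫ ω, |N ω| ^ p) * (2 / κ) ^ (p - 1) := integral_mul_const _ _
    have h3 : (∫ ω, |N ω| ^ p) * (2 / κ) ^ (p - 1) ≤ Cp * σ ^ p * (2 / κ) ^ (p - 1) :=
      mul_le_mul_of_nonneg_right hNp (by positivity)
    have h4 : Cp * σ ^ p * (2 / κ) ^ (p - 1) ≤
        Cp * (σ / (8 * Cp * Real.sqrt (↑n * α) / Real.log (2 / α))) := by
      rw [mul_assoc]
      exact mul_le_mul_of_nonneg_left
        (kappa_pow κ σ p _ hκpos hσ hp hK0 hκ3) (by linarith)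
    have hCp0 : Cp ≠ 0 := by linarith
    have h5 : Cp * (σ / (8 * Cp * Real.sqrt (↑n * α) / Real.log (2 / α))) = L := by
      rw [hLdef]
      field_simp
    linarith
  -- integrable pieces
  have hE1int : Integrable (fun ω => 4 * ‖v‖ ^ 3 / κ ^ 2 * g ω ^ 4) ℙ := hg4.const_mul _
  have habsg_int : Integrable (fun ω => |g ω|) ℙ := hg1.abs
  have hindE2 : IndepFun (fun ω => max (|N ω| - κ / 2) 0) (fun ω => |g ω|) ℙ :=
    hindep.symm.comp ((measurable_id.abs.sub measurable_const).max measurable_const)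
      (continuous_id.inner continuous_const).measurable.abs
  have hE2int : Integrable (fun ω => max (|N ω| - κ / 2) 0 * |g ω|) ℙ :=
    hindE2.integrable_mul hNtail_int habsg_int
  have hE2val : (∫ ω, max (|N ω| - κ / 2) 0 * |g ω|) ≤ L := by
    have he : (∫ ω, max (|N ω| - κ / 2) 0 * |g ω|) =
        (∫ ω, max (|N ω| - κ / 2) 0) * ∫ ω, |g ω| :=
      hindE2.integral_fun_mul_eq_mul_integral
        ((hNmeas.abs.sub measurable_const).max measurable_const).aestronglyMeasurable
        hgm.abs.aestronglyMeasurable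
    have hg_abs_le : (∫ ω, |g ω|) ≤ 1 := by
      have hpt : ∀ ω, |g ω| ≤ (1 + g ω ^ 2) / 2 := by
        intro ω
        nlinarith [sq_nonneg (|g ω| - 1), sq_abs (g ω)]
      have hle := integral_mono habsg_int (((integrable_const (1:ℝ)).add hg2).div_const 2) hpt
      simp only [Pi.add_apply] at hle
      rw [integral_div, integral_add (integrable_const (1:ℝ)) hg2, integral_const] at hle
      simp only [probReal_univ, measure_univ, ENNReal.toReal_one, smul_eq_mul, one_mul] at hle
      linarith
    have h0 : 0 ≤ ∫ ω, max (|N ω| - κ / 2) 0 :=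
      integral_nonneg fun ω => le_max_right _ _
    rw [he]
    calc (∫ ω, max (|N ω| - κ / 2) 0) * ∫ ω, |g ω|
        ≤ (∫ ω, max (|N ω| - κ / 2) 0) * 1 := mul_le_mul_of_nonneg_left hg_abs_le h0
      _ ≤ L := by rw [mul_one]; exact hNtail_le
  -- residual integrability
  have hZg_int : Integrable (fun ω => ⟪X ω, v⟫ * g ω) ℙ := by
    have heq : (fun ω => ⟪X ω, v⟫ * g ω) = fun ω => ‖v‖ * g ω ^ 2 :=
      funext fun ω => by rw [hZg ω]; ring
    rw [heq]; exact hg2.const_mul _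
  have hψg_int : Integrable
      (fun ω => (κ * ((⟪X ω, v⟫ - N ω) / max |⟪X ω, v⟫ - N ω| κ)) * g ω) ℙ := by
    exact hg1.smul_of_top_right hψAmem
  have hrg_int : Integrable
      (fun ω => (⟪X ω, v⟫ - N ω - κ * ((⟪X ω, v⟫ - N ω) / max |⟪X ω, v⟫ - N ω| κ)) * g ω) ℙ := by
    have heq : (fun ω => (⟪X ω, v⟫ - N ω - κ * ((⟪X ω, v⟫ - N ω) / max |⟪X ω, v⟫ - N ω| κ)) * g ω)
        = fun ω => ⟪X ω, v⟫ * g ω - N ω * g ω -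
            (κ * ((⟪X ω, v⟫ - N ω) / max |⟪X ω, v⟫ - N ω| κ)) * g ω :=
      funext fun ω => by ring
    rw [heq]
    exact (hZg_int.sub hNg_int).sub hψg_int
  -- pointwise error bound
  have herr_pt : ∀ ω,
      |(⟪X ω, v⟫ - N ω - κ * ((⟪X ω, v⟫ - N ω) / max |⟪X ω, v⟫ - N ω| κ)) * g ω| ≤
        4 * ‖v‖ ^ 3 / κ ^ 2 * g ω ^ 4 + max (|N ω| - κ / 2) 0 * |g ω| := by
    intro ω
    rw [abs_mul, clip_resid κ hκpos]
    have t1 : max (|⟪X ω, v⟫ - N ω| - κ) 0 ≤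
        max (|⟪X ω, v⟫| - κ / 2) 0 + max (|N ω| - κ / 2) 0 := by
      refine le_trans ?_ (tri_max |⟪X ω, v⟫| |N ω| κ)
      have habs : |⟪X ω, v⟫ - N ω| ≤ |⟪X ω, v⟫| + |N ω| := by
        simpa [sub_eq_add_neg, abs_neg] using abs_add_le (⟪X ω, v⟫) (-(N ω))
      rcases le_or_gt (|⟪X ω, v⟫ - N ω|) κ with h | h
      · rw [max_eq_right (by linarith)]; positivity
      · apply max_le _ (by positivity)
        have := le_max_left (|⟪X ω, v⟫| + |N ω| - κ) 0
        linarith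
    have t2 : max (|⟪X ω, v⟫| - κ / 2) 0 * |g ω| ≤ 4 * ‖v‖ ^ 3 / κ ^ 2 * g ω ^ 4 := by
      have hc := cube_bound κ hκpos |⟪X ω, v⟫| (abs_nonneg _)
      have hZ3 : |⟪X ω, v⟫| = ‖v‖ * |g ω| := by
        rw [hZg ω, abs_mul, abs_of_nonneg (norm_nonneg v)]
      rw [hZ3] at hc ⊢
      have hg4e : |g ω| ^ 4 = g ω ^ 4 := by
        rw [pow_abs, abs_of_nonneg (by positivity : (0:ℝ) ≤ g ω ^ 4)]
      calc max (‖v‖ * |g ω| - κ / 2) 0 * |g ω|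
          ≤ 4 * (‖v‖ * |g ω|) ^ 3 / κ ^ 2 * |g ω| :=
            mul_le_mul_of_nonneg_right hc (abs_nonneg _)
        _ = 4 * ‖v‖ ^ 3 / κ ^ 2 * (|g ω| ^ 3 * |g ω|) := by ring
        _ = 4 * ‖v‖ ^ 3 / κ ^ 2 * g ω ^ 4 := by
            rw [← pow_succ |g ω| 3, hg4e]
    calc max (|⟪X ω, v⟫ - N ω| - κ) 0 * |g ω|
        ≤ (max (|⟪X ω, v⟫| - κ / 2) 0 + max (|N ω| - κ / 2) 0) * |g ω| :=
          mul_le_mul_of_nonneg_right t1 (abs_nonneg _)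
      _ = max (|⟪X ω, v⟫| - κ / 2) 0 * |g ω| + max (|N ω| - κ / 2) 0 * |g ω| := add_mul _ _ _
      _ ≤ 4 * ‖v‖ ^ 3 / κ ^ 2 * g ω ^ 4 + max (|N ω| - κ / 2) 0 * |g ω| :=
          add_le_add t2 le_rfl
  -- integral error bound
  have herr : (∫ ω, (⟪X ω, v⟫ - N ω - κ * ((⟪X ω, v⟫ - N ω) / max |⟪X ω, v⟫ - N ω| κ)) * g ω) ≤
      ‖v‖ * s / 16 + L := by
    have h4g : (∫ ω, g ω ^ 4) ≤ C * s ^ 2 := hhc u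
    calc (∫ ω, (⟪X ω, v⟫ - N ω - κ * ((⟪X ω, v⟫ - N ω) / max |⟪X ω, v⟫ - N ω| κ)) * g ω)
        ≤ ∫ ω, |(⟪X ω, v⟫ - N ω - κ * ((⟪X ω, v⟫ - N ω) / max |⟪X ω, v⟫ - N ω| κ)) * g ω| := by
          refine le_trans (le_abs_self _) ?_
          simpa only [Real.norm_eq_abs] using norm_integral_le_integral_norm (μ := ℙ)
            (fun ω => (⟪X ω, v⟫ - N ω - κ * ((⟪X ω, v⟫ - N ω) / max |⟪X ω, v⟫ - N ω| κ)) * g ω)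
      _ ≤ ∫ ω, (4 * ‖v‖ ^ 3 / κ ^ 2 * g ω ^ 4 + max (|N ω| - κ / 2) 0 * |g ω|) :=
          integral_mono hrg_int.abs (hE1int.add hE2int) herr_pt
      _ = 4 * ‖v‖ ^ 3 / κ ^ 2 * (∫ ω, g ω ^ 4) + ∫ ω, max (|N ω| - κ / 2) 0 * |g ω| := by
          rw [integral_add hE1int hE2int, integral_const_mul]
      _ ≤ 4 * ‖v‖ ^ 3 / κ ^ 2 * (C * s ^ 2) + L := by
          exact add_le_add (mul_le_mul_of_nonneg_left h4g (by positivity)) hE2val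
      _ ≤ ‖v‖ * s / 16 + L := by
          have hle : 4 * ‖v‖ ^ 3 / κ ^ 2 * (C * s ^ 2) ≤ ‖v‖ * s / 16 := by
            rw [div_mul_eq_mul_div, div_le_iff₀ (by positivity : (0:ℝ) < κ ^ 2)]
            nlinarith [mul_le_mul_of_nonneg_right hκ1 (mul_nonneg hvn.le hs0)]
          linarith
  -- main term
  have hmain : (∫ ω, (⟪X ω, v⟫ - N ω) * g ω) = ‖v‖ * s := by
    have heq : (fun ω => (⟪X ω, v⟫ - N ω) * g ω) = fun ω => ‖v‖ * g ω ^ 2 - N ω * g ω :=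
      funext fun ω => by rw [hZg ω]; ring
    rw [heq, integral_sub (hg2.const_mul _) hNg_int, integral_const_mul, hNg_zero, sub_zero]
  -- split
  have hsplit : (∫ ω, (κ * ((⟪X ω, v⟫ - N ω) / max |⟪X ω, v⟫ - N ω| κ)) * g ω) =
      ‖v‖ * s -
        ∫ ω, (⟪X ω, v⟫ - N ω - κ * ((⟪X ω, v⟫ - N ω) / max |⟪X ω, v⟫ - N ω| κ)) * g ω := by
    rw [eq_sub_iff_add_eq, ← integral_add hψg_int hrg_int, ← hmain]
    congr 1; funext ω; ring
  -- final assembly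
  have hC₃0 : (0:ℝ) < C₃ := by linarith
  have h1s : 1 ≤ s * C₃ := by rwa [div_le_iff₀ hC₃0] at hsl
  have h2 : 11 / (16 * C₃) * ‖v‖ ≤ 15 / 16 * (‖v‖ * s) := by
    rw [div_mul_eq_mul_div, div_le_iff₀ (by positivity : (0:ℝ) < 16 * C₃)]
    nlinarith [mul_le_mul_of_nonneg_left h1s (by positivity : (0:ℝ) ≤ 15 / 16 * ‖v‖), hvn.le]
  have hfinal : 11 / (16 * C₃) * ‖v‖ - L ≤
      ∫ ω, (κ * ((⟪X ω, v⟫ - N ω) / max |⟪X ω, v⟫ - N ω| κ)) * g ω := by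
    rw [hsplit]
    linarith [herr]
  exact le_trans hfinal hproj
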